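/- arXiv:1404.0720 — 3 statements merged into one kernel-verified Lean document; each statement's English description precedes it below -/
import Mathlib

section
/- Let Ω ⊆ ℝ² be open and let u, v : Ω → ℝ be twice continuously differentiable. Set H = diag(1,−1) and E = E₁₂ (the 2×2 matrix with 1 in position (1,2) and 0 elsewhere). Then the 𝔪-valued harmonic map equation Δu·H + Δv·E + Σᵢ₌₁² β(∂ᵢu·H + ∂ᵢv·E, ∂ᵢu·H + ∂ᵢv·E) = 0 holds on Ω if and only if Δu = 0 and Δv = 0 on Ω, i.e., if and only if the two coordinate functions are harmonic. -/
open Matrix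

/-- Partial derivative of `f : (Fin m → ℝ) → ℝ` in the `i`-th coordinate
direction. -/
noncomputable def pderiv2 {m : ℕ} (i : Fin m) (f : (Fin m → ℝ) → ℝ)
    (x : Fin m → ℝ) : ℝ :=
  fderiv ℝ f x (Pi.single i 1)

/-- Euclidean Laplacian of `f : (Fin m → ℝ) → ℝ`. -/
noncomputable def laplacian2 {m : ℕ} (f : (Fin m → ℝ) → ℝ) (x : Fin m → ℝ) : ℝ :=
  ∑ i : Fin m, pderiv2 i (pderiv2 i f) x

/-- The Fisher α-connection function
`β(X,Y) = (XY + YX)/2 − (tr(XY)/2)·I` on real 2×2 matrices. -/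
noncomputable def fisherBeta2 (X Y : Matrix (Fin 2) (Fin 2) ℝ) :
    Matrix (Fin 2) (Fin 2) ℝ :=
  (2⁻¹ : ℝ) • (X * Y + Y * X) - ((X * Y).trace / 2) • (1 : Matrix (Fin 2) (Fin 2) ℝ)

lemma fisherBeta2_diag (a b : ℝ) :
    fisherBeta2 (a • !![(1:ℝ), 0; 0, -1] + b • !![0, 1; 0, 0])
      (a • !![(1:ℝ), 0; 0, -1] + b • !![0, 1; 0, 0]) = 0 := by
  ext i j
  fin_cases i <;> fin_cases j <;>
    simp [fisherBeta2, Matrix.mul_apply, Fin.sum_univ_two, Matrix.trace,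
      Matrix.diag, Matrix.one_apply] <;> ring

/-- Let `Ω ⊆ ℝ²` be open and `u, v : Ω → ℝ` be C². With `H = diag(1,−1)` and
`E = E₁₂`, the 𝔪-valued harmonic map equation
`Δu·H + Δv·E + Σᵢ β(∂ᵢu·H + ∂ᵢv·E, ∂ᵢu·H + ∂ᵢv·E) = 0` holds on `Ω` iff
`Δu = 0` and `Δv = 0` on `Ω`, i.e. iff both coordinate functions are
harmonic. -/
theorem sl2_harmonic_iff_coords_harmonic
    (Ω : Set (Fin 2 → ℝ)) (hΩ : IsOpen Ω)
    (u v : (Fin 2 → ℝ) → ℝ)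
    (hu : ContDiffOn ℝ 2 u Ω) (hv : ContDiffOn ℝ 2 v Ω)
    (H E : Matrix (Fin 2) (Fin 2) ℝ)
    (hH : H = !![1, 0; 0, -1]) (hE : E = !![0, 1; 0, 0]) :
    (∀ x ∈ Ω,
        laplacian2 u x • H + laplacian2 v x • E +
          ∑ i : Fin 2,
            fisherBeta2 (pderiv2 i u x • H + pderiv2 i v x • E)
              (pderiv2 i u x • H + pderiv2 i v x • E) = 0) ↔
      (∀ x ∈ Ω, laplacian2 u x = 0 ∧ laplacian2 v x = 0) := by
  subst hH hE
  constructor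
  · intro h x hx
    have hx' := h x hx
    simp only [fisherBeta2_diag, Finset.sum_const_zero, add_zero] at hx'
    have h00 := congrFun (congrFun hx' 0) 0
    have h01 := congrFun (congrFun hx' 0) 1
    simp [Matrix.add_apply, Matrix.smul_apply] at h00 h01
    exact ⟨h00, h01⟩
  · intro h x hx
    obtain ⟨h1, h2⟩ := h x hx
    simp only [h1, h2, zero_smul, zero_add, fisherBeta2_diag, Finset.sum_const_zero]
end

section
/- Let u, v : ℝ → ℝ be twice differentiable with u(0) = 1 and v(0) = 0, and write a = u′(0), m = v′(0). Set H = diag(1,−1) and E = E₁₂. Then the geodesic equation u″(t)·H + v″(t)·E + β(u′(t)·H + v′(t)·E, u′(t)·H + v′(t)·E) = 0 holds for all t ∈ ℝ if and only if u(t) = a·t + 1 and v(t) = m·t for all t. -/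
open Matrix

lemma comb_eq (c d : ℝ) : c • !![(1:ℝ),0;0,-1] + d • !![0,1;0,0] = !![c, d; 0, -c] := by
  ext i j; fin_cases i <;> fin_cases j <;> simp

lemma beta_zero (c d : ℝ) :
    fisherBeta2 (c • !![(1:ℝ),0;0,-1] + d • !![0,1;0,0])
      (c • !![(1:ℝ),0;0,-1] + d • !![0,1;0,0]) = 0 := by
  rw [comb_eq]
  unfold fisherBeta2
  have hm : (!![c, d; 0, -c] * !![c, d; 0, -c]) = !![c^2, 0; 0, c^2] := by
    rw [Matrix.mul_fin_two]; ring_nf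
  rw [hm, Matrix.trace_fin_two]
  ext i j; fin_cases i <;> fin_cases j <;> simp [Matrix.one_fin_two] <;> ring

/-- Let `u, v : ℝ → ℝ` be twice differentiable with `u 0 = 1`, `v 0 = 0`, and
set `a = u′(0)`, `m = v′(0)`, `H = diag(1,−1)`, `E = E₁₂`. The geodesic
equation `u″·H + v″·E + β(u′·H + v′·E, u′·H + v′·E) = 0` holds for all `t`
iff `u t = a·t + 1` and `v t = m·t` for all `t`. -/
theorem sl2_geodesic_iff_linear
    (u v : ℝ → ℝ)
    (hu₁ : Differentiable ℝ u) (hu₂ : Differentiable ℝ (deriv u))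
    (hv₁ : Differentiable ℝ v) (hv₂ : Differentiable ℝ (deriv v))
    (hu0 : u 0 = 1) (hv0 : v 0 = 0)
    (a m : ℝ) (ha : a = deriv u 0) (hm : m = deriv v 0)
    (H E : Matrix (Fin 2) (Fin 2) ℝ)
    (hH : H = !![1, 0; 0, -1]) (hE : E = !![0, 1; 0, 0]) :
    (∀ t : ℝ,
        deriv (deriv u) t • H + deriv (deriv v) t • E +
          fisherBeta2 (deriv u t • H + deriv v t • E)
            (deriv u t • H + deriv v t • E) = 0) ↔
      (∀ t : ℝ, u t = a * t + 1 ∧ v t = m * t) := by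
  subst hH hE
  constructor
  · intro h t
    -- extract u'' = 0 and v'' = 0
    have key : ∀ s : ℝ, deriv (deriv u) s = 0 ∧ deriv (deriv v) s = 0 := by
      intro s
      have hs := h s
      rw [beta_zero, add_zero] at hs
      have h00 := congrFun (congrFun hs 0) 0
      have h01 := congrFun (congrFun hs 0) 1
      simp at h00 h01
      exact ⟨h00, h01⟩
    have hcu : ∀ s : ℝ, deriv u s = a := by
      intro s
      rw [ha]
      exact is_const_of_deriv_eq_zero hu₂ (fun x => (key x).1) s 0
    have hcv : ∀ s : ℝ, deriv v s = m := by
      intro s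
      rw [hm]
      exact is_const_of_deriv_eq_zero hv₂ (fun x => (key x).2) s 0
    have hu' : ∀ s : ℝ, (fun x => u x - a * x) s = (fun x => u x - a * x) 0 := by
      intro s
      apply is_const_of_deriv_eq_zero (hu₁.sub (differentiable_id.const_mul a))
      intro x
      have hd : HasDerivAt (fun y => u y - a * y) 0 x := by
        have := ((hu₁ x).hasDerivAt).sub ((hasDerivAt_id x).const_mul a)
        rw [hcu x, mul_one, sub_self] at this
        exact this
      exact hd.deriv
    have hv' : ∀ s : ℝ, (fun x => v x - m * x) s = (fun x => v x - m * x) 0 := by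
      intro s
      apply is_const_of_deriv_eq_zero (hv₁.sub (differentiable_id.const_mul m))
      intro x
      have hd : HasDerivAt (fun y => v y - m * y) 0 x := by
        have := ((hv₁ x).hasDerivAt).sub ((hasDerivAt_id x).const_mul m)
        rw [hcv x, mul_one, sub_self] at this
        exact this
      exact hd.deriv
    have h1 := hu' t
    have h2 := hv' t
    simp only [mul_zero, sub_zero] at h1 h2
    rw [hu0] at h1
    rw [hv0] at h2
    constructor <;> linarith
  · intro h
    have hufun : u = fun t => a * t + 1 := funext fun t => (h t).1
    have hvfun : v = fun t => m * t := funext fun t => (h t).2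
    have hdu : deriv u = fun _ => a := by
      rw [hufun]; ext t
      have : HasDerivAt (fun t : ℝ => a * t + 1) a t := by
        simpa using ((hasDerivAt_id t).const_mul a).add_const 1
      exact this.deriv
    have hdv : deriv v = fun _ => m := by
      rw [hvfun]; ext t
      have : HasDerivAt (fun t : ℝ => m * t) m t := by
        simpa using (hasDerivAt_id t).const_mul m
      exact this.deriv
    intro t
    rw [hdu, hdv]
    simp only [deriv_const]
    rw [beta_zero]
    simp
end

section
/- Let N be a strictly upper triangular real n×n matrix (so Nⁿ = 0), and define the matrix-valued polynomial curve B(t) = Σ_{m=1}^{n−1} ((−1)^{m−1}/m)·tᵐ·Nᵐ. Then B(0) = 0, B′(0) = N, and B satisfies the geodesic system B″(t) + (B′(t))² = 0 for all t ∈ ℝ; entrywise, the functions b_{ij}(t) = B(t)_{ij} satisfy b_{ij}″(t) + Σ_{i<k<j} b_{ik}′(t)·b_{kj}′(t) = 0 for all 1 ≤ i < j ≤ n. -/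
open Matrix Finset

private noncomputable def Dmat (n : ℕ) (N : Matrix (Fin n) (Fin n) ℝ) (t : ℝ) :
    Matrix (Fin n) (Fin n) ℝ :=
  ∑ m ∈ Icc 1 (n - 1), ((-1 : ℝ) ^ (m - 1) * t ^ (m - 1)) • N ^ m

private noncomputable def Emat (n : ℕ) (N : Matrix (Fin n) (Fin n) ℝ) (t : ℝ) :
    Matrix (Fin n) (Fin n) ℝ :=
  ∑ m ∈ Icc 1 (n - 1), ((-1 : ℝ) ^ (m - 1) * ((m - 1 : ℕ) : ℝ) * t ^ (m - 2)) • N ^ m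

private lemma geo_id (n : ℕ) (N : Matrix (Fin n) (Fin n) ℝ)
    (hpow : ∀ c, n ≤ c → N ^ c = 0) (hn : 1 ≤ n) (t : ℝ) :
    Emat n N t + (Dmat n N t) ^ 2 = 0 := by
  set M : Matrix (Fin n) (Fin n) ℝ := (-t) • N with hM
  set C : Matrix (Fin n) (Fin n) ℝ := ∑ k ∈ range n, M ^ k with hC
  have hMn : M ^ n = 0 := by rw [hM, smul_pow, hpow n le_rfl, smul_zero]
  have hgeom : (1 - M) * C = 1 := by
    have : (1 - M) * C = ∑ k ∈ range n, (M ^ k - M ^ (k + 1)) := by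
      rw [hC, Finset.mul_sum]
      apply Finset.sum_congr rfl
      intro k _
      rw [sub_mul, one_mul, pow_succ']
    rw [this, Finset.sum_range_sub' (fun k => M ^ k) n, pow_zero, hMn, sub_zero]
  have hNC : N * C = C * N := by
    rw [hC, Finset.mul_sum, Finset.sum_mul]
    apply Finset.sum_congr rfl
    intro k _
    rw [hM, smul_pow, mul_smul_comm, smul_mul_assoc, ← pow_succ, ← pow_succ']
  -- D = N * C
  have hrange : range n = Icc 0 (n - 1) := by
    ext x; simp only [Finset.mem_range, Finset.mem_Icc]; omega
  have hD : Dmat n N t = N * C := by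
    have step1 : N * C = ∑ k ∈ Icc 0 (n - 1), ((-t) ^ k) • N ^ (k + 1) := by
      rw [hC, Finset.mul_sum, hrange]
      apply Finset.sum_congr rfl
      intro k _
      rw [hM, smul_pow, mul_smul_comm, ← pow_succ']
    have step2 : ∑ k ∈ Icc 0 (n - 1), ((-t) ^ k) • N ^ (k + 1) =
        ∑ m ∈ Icc 1 n, ((-t) ^ (m - 1)) • N ^ m := by
      rw [show Icc 1 n = Icc (0 + 1) (n - 1 + 1) by congr 1 <;> omega,
        ← Finset.map_add_right_Icc, Finset.sum_map]
      apply Finset.sum_congr rfl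
      intro k _
      simp [addRightEmbedding_apply]
    have step3 : ∑ m ∈ Icc 1 n, ((-t) ^ (m - 1)) • N ^ m =
        ∑ m ∈ Icc 1 (n - 1), ((-t) ^ (m - 1)) • N ^ m := by
      symm
      apply Finset.sum_subset
      · apply Finset.Icc_subset_Icc_right; omega
      · intro m hm hm'
        rw [Finset.mem_Icc] at hm hm'
        rw [hpow m (by omega), smul_zero]
    rw [step1, step2, step3, Dmat]
    apply Finset.sum_congr rfl
    intro m _
    rw [neg_pow]
    ring_nf
  -- the coefficient function
  set e : ℕ → ℝ := fun m => (-1 : ℝ) ^ (m - 1) * ((m - 1 : ℕ) : ℝ) * t ^ (m - 2) with he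
  have he0 : e 0 = 0 := by simp [he]
  -- shift helper
  have hshift : ∀ a : ℕ, a ≤ 2 →
      ∑ m ∈ Icc 1 (n - 1), e m • N ^ (m + a) = ∑ c ∈ Icc 1 (n + 2), e (c - a) • N ^ c := by
    intro a ha
    have hsub : Icc (1 + a) (n - 1 + a) ⊆ Icc 1 (n + 2) := by
      apply Finset.Icc_subset_Icc <;> omega
    have hzero : ∀ c ∈ Icc 1 (n + 2), c ∉ Icc (1 + a) (n - 1 + a) → e (c - a) • N ^ c = 0 := by
      intro c hc hc'
      rw [Finset.mem_Icc] at hc hc'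
      by_cases h : c < 1 + a
      · have : c - a = 0 := by omega
        rw [this, he0, zero_smul]
      · have : n ≤ c := by omega
        rw [hpow c this, smul_zero]
    rw [← Finset.sum_subset hsub hzero, ← Finset.map_add_right_Icc, Finset.sum_map]
    apply Finset.sum_congr rfl
    intro m _
    simp [addRightEmbedding_apply]
  have hE0 : Emat n N t = ∑ c ∈ Icc 1 (n + 2), e c • N ^ c := by
    have := hshift 0 (by omega)
    simpa [Emat] using this
  have hE1 : Emat n N t * N = ∑ c ∈ Icc 1 (n + 2), e (c - 1) • N ^ c := by
    rw [← hshift 1 (by omega), Emat, Finset.sum_mul]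
    apply Finset.sum_congr rfl
    intro m _
    rw [smul_mul_assoc, ← pow_succ]
  have hE2 : Emat n N t * N * N = ∑ c ∈ Icc 1 (n + 2), e (c - 2) • N ^ c := by
    rw [← hshift 2 (by omega), Emat, Finset.sum_mul, Finset.sum_mul]
    apply Finset.sum_congr rfl
    intro m _
    rw [smul_mul_assoc, smul_mul_assoc, ← pow_succ, ← pow_succ]
  -- key coefficient computation
  have coef : ∀ c : ℕ, 1 ≤ c →
      e c + 2 * t * e (c - 1) + t ^ 2 * e (c - 2) = if c = 2 then -1 else 0 := by
    intro c hc
    match c with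
    | 1 => simp [he]
    | 2 => norm_num [he]
    | 3 =>
      rw [if_neg (by omega)]
      norm_num [he]
    | (k + 4) =>
      have h1 : k + 4 - 1 = k + 3 := by omega
      have h2 : k + 4 - 2 = k + 2 := by omega
      have h3 : k + 3 - 1 = k + 2 := by omega
      have h4 : k + 3 - 2 = k + 1 := by omega
      have h5 : k + 2 - 1 = k + 1 := by omega
      have h6 : k + 2 - 2 = k := by omega
      rw [if_neg (by omega)]
      simp only [he, h1, h2, h3, h4, h5, h6]
      push_cast
      ring
  have hkey : Emat n N t + (2 * t) • (Emat n N t * N) + (t ^ 2) • (Emat n N t * N * N)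
      = -(N ^ 2) := by
    rw [hE2, hE1, hE0, Finset.smul_sum, Finset.smul_sum, ← Finset.sum_add_distrib,
      ← Finset.sum_add_distrib]
    have : ∀ c ∈ Icc 1 (n + 2),
        e c • N ^ c + (2 * t) • e (c - 1) • N ^ c + (t ^ 2) • e (c - 2) • N ^ c
          = if c = 2 then (-1 : ℝ) • N ^ c else 0 := by
      intro c hc
      rw [Finset.mem_Icc] at hc
      rw [smul_smul, smul_smul, ← add_smul, ← add_smul, coef c (by omega)]
      split_ifs <;> simp
    rw [Finset.sum_congr rfl this, Finset.sum_ite_eq' (Icc 1 (n + 2)) 2 (fun c => (-1 : ℝ) • N ^ c),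
      if_pos (by rw [Finset.mem_Icc]; omega)]
    simp
  -- expansion of E * (1-M)^2
  have hEM : Emat n N t * M = (-t) • (Emat n N t * N) := by
    rw [hM, mul_smul_comm]
  have hEMM : Emat n N t * M * M = (t ^ 2) • (Emat n N t * N * N) := by
    rw [hEM, hM, smul_mul_assoc, mul_smul_comm, smul_smul]
    module
  have hexp : Emat n N t * (1 - M) * (1 - M) = -(N ^ 2) := by
    have : Emat n N t * (1 - M) * (1 - M)
        = Emat n N t - Emat n N t * M - (Emat n N t * M - Emat n N t * M * M) := by
      noncomm_ring
    rw [this, hEMM, hEM, ← hkey]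
    module
  -- conclude
  have hone : Emat n N t = Emat n N t * (1 - M) * (1 - M) * (C * C) := by
    rw [mul_assoc (Emat n N t * (1 - M)) (1 - M) (C * C), ← mul_assoc (1 - M) C C, hgeom,
      one_mul, mul_assoc, hgeom, mul_one]
  have hE : Emat n N t = -(N ^ 2) * (C * C) := by rw [hone, hexp]
  have hD2 : (Dmat n N t) ^ 2 = N ^ 2 * (C * C) := by
    rw [pow_two, hD, pow_two]
    rw [mul_assoc, ← mul_assoc C N C, ← hNC, mul_assoc, ← mul_assoc, ← mul_assoc]
  rw [hE, hD2, neg_mul, neg_add_cancel]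

private lemma pow_entry_zero {n : ℕ} {N : Matrix (Fin n) (Fin n) ℝ}
    (hN : ∀ i j : Fin n, j ≤ i → N i j = 0) :
    ∀ m (i j : Fin n), (j : ℕ) < (i : ℕ) + m → (N ^ m) i j = 0 := by
  intro m
  induction m with
  | zero =>
    intro i j h
    have hij : i ≠ j := by intro he; rw [he] at h; omega
    simp [Matrix.one_apply, hij]
  | succ m ih =>
    intro i j h
    rw [pow_succ, Matrix.mul_apply]
    apply Finset.sum_eq_zero
    intro k _
    by_cases hk : (k : ℕ) < (i : ℕ) + m
    · rw [ih i k hk, zero_mul]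
    · have hjk : j ≤ k := by rw [Fin.le_def]; omega
      rw [hN k j hjk, mul_zero]

private lemma pow_zero_of_le {n : ℕ} {N : Matrix (Fin n) (Fin n) ℝ}
    (hN : ∀ i j : Fin n, j ≤ i → N i j = 0) :
    ∀ c, n ≤ c → N ^ c = 0 := by
  intro c hc
  ext i j
  have := j.isLt
  simpa using pow_entry_zero hN c i j (by omega)

private lemma B_hasDeriv (n : ℕ) (N : Matrix (Fin n) (Fin n) ℝ) (i j : Fin n) (t : ℝ) :
    HasDerivAt
      (fun s : ℝ => (∑ m ∈ Icc 1 (n - 1), ((-1 : ℝ) ^ (m - 1) / (m : ℝ) * s ^ m) • N ^ m) i j)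
      (Dmat n N t i j) t := by
  have h2 : (fun s : ℝ =>
        (∑ m ∈ Icc 1 (n - 1), ((-1 : ℝ) ^ (m - 1) / (m : ℝ) * s ^ m) • N ^ m) i j) =
      fun s => ∑ m ∈ Icc 1 (n - 1), ((-1 : ℝ) ^ (m - 1) / (m : ℝ) * s ^ m) * (N ^ m) i j := by
    funext s
    simp [Matrix.sum_apply, smul_eq_mul]
  rw [h2]
  have h1 : HasDerivAt
      (fun s : ℝ => ∑ m ∈ Icc 1 (n - 1), ((-1 : ℝ) ^ (m - 1) / (m : ℝ) * s ^ m) * (N ^ m) i j)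
      (∑ m ∈ Icc 1 (n - 1), ((-1 : ℝ) ^ (m - 1) / (m : ℝ) * ((m : ℝ) * t ^ (m - 1))) * (N ^ m) i j)
      t := by
    apply HasDerivAt.fun_sum
    intro m hm
    exact ((hasDerivAt_pow m t).const_mul ((-1 : ℝ) ^ (m - 1) / (m : ℝ))).mul_const _
  have h3 : Dmat n N t i j =
      ∑ m ∈ Icc 1 (n - 1), ((-1 : ℝ) ^ (m - 1) / (m : ℝ) * ((m : ℝ) * t ^ (m - 1))) * (N ^ m) i j := by
    rw [Dmat, Matrix.sum_apply]
    apply Finset.sum_congr rfl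
    intro m hm
    rw [Finset.mem_Icc] at hm
    have hm0 : (m : ℝ) ≠ 0 := Nat.cast_ne_zero.2 (by omega)
    rw [Matrix.smul_apply, smul_eq_mul]
    field_simp
  rw [h3]
  exact h1

private lemma D_hasDeriv (n : ℕ) (N : Matrix (Fin n) (Fin n) ℝ) (i j : Fin n) (t : ℝ) :
    HasDerivAt (fun s : ℝ => Dmat n N s i j) (Emat n N t i j) t := by
  have h2 : (fun s : ℝ => Dmat n N s i j) =
      fun s => ∑ m ∈ Icc 1 (n - 1), ((-1 : ℝ) ^ (m - 1) * s ^ (m - 1)) * (N ^ m) i j := by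
    funext s
    simp [Dmat, Matrix.sum_apply, smul_eq_mul]
  rw [h2]
  have h1 : HasDerivAt
      (fun s : ℝ => ∑ m ∈ Icc 1 (n - 1), ((-1 : ℝ) ^ (m - 1) * s ^ (m - 1)) * (N ^ m) i j)
      (∑ m ∈ Icc 1 (n - 1), ((-1 : ℝ) ^ (m - 1) * (((m - 1 : ℕ) : ℝ) * t ^ (m - 1 - 1))) * (N ^ m) i j)
      t := by
    apply HasDerivAt.fun_sum
    intro m hm
    exact ((hasDerivAt_pow (m - 1) t).const_mul ((-1 : ℝ) ^ (m - 1))).mul_const _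
  have h3 : Emat n N t i j =
      ∑ m ∈ Icc 1 (n - 1), ((-1 : ℝ) ^ (m - 1) * (((m - 1 : ℕ) : ℝ) * t ^ (m - 1 - 1))) * (N ^ m) i j := by
    rw [Emat, Matrix.sum_apply]
    apply Finset.sum_congr rfl
    intro m hm
    rw [Matrix.smul_apply, smul_eq_mul, show m - 1 - 1 = m - 2 by omega]
    ring
  rw [h3]
  exact h1

private lemma Dmat_upper {n : ℕ} {N : Matrix (Fin n) (Fin n) ℝ}
    (hN : ∀ i j : Fin n, j ≤ i → N i j = 0) (t : ℝ) (i j : Fin n) (hij : j ≤ i) :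
    Dmat n N t i j = 0 := by
  rw [Dmat, Matrix.sum_apply]
  apply Finset.sum_eq_zero
  intro m hm
  rw [Finset.mem_Icc] at hm
  have : (N ^ m) i j = 0 := by
    apply pow_entry_zero hN
    rw [Fin.le_def] at hij
    omega
  rw [Matrix.smul_apply, this, smul_zero]

/-- Let `N` be strictly upper triangular (so `Nⁿ = 0`) and let
`B(t) = Σ_{m=1}^{n−1} ((−1)^{m−1}/m)·tᵐ·Nᵐ`. Then `B(0) = 0`, `B′(0) = N`,
and `B` satisfies the geodesic system `B″(t) + (B′(t))² = 0`; entrywise,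
`b_{ij}″(t) + Σ_{i<k<j} b_{ik}′(t)·b_{kj}′(t) = 0` for all `i < j`. -/
theorem nilpotent_log_curve_geodesic (n : ℕ)
    (N : Matrix (Fin n) (Fin n) ℝ)
    (hN : ∀ i j : Fin n, j ≤ i → N i j = 0)
    (B : ℝ → Matrix (Fin n) (Fin n) ℝ)
    (hB : B = fun t => ∑ m ∈ Finset.Icc 1 (n - 1),
      ((-1 : ℝ) ^ (m - 1) / (m : ℝ) * t ^ m) • N ^ m) :
    N ^ n = 0 ∧
    B 0 = 0 ∧
    (∀ i j : Fin n, deriv (fun t => B t i j) 0 = N i j) ∧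
    (∀ t : ℝ,
      (Matrix.of fun i j : Fin n => deriv (deriv fun s => B s i j) t) +
        (Matrix.of fun i j : Fin n => deriv (fun s => B s i j) t) ^ 2 = 0) ∧
    (∀ t : ℝ, ∀ i j : Fin n, i < j →
      deriv (deriv fun s => B s i j) t +
        ∑ k ∈ Finset.Ioo i j,
          deriv (fun s => B s i k) t * deriv (fun s => B s k j) t = 0) := by
  subst hB
  have hpow := pow_zero_of_le hN
  -- first derivatives
  have hd1 : ∀ (i j : Fin n) (t : ℝ),
      deriv (fun s => (∑ m ∈ Finset.Icc 1 (n - 1),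
        ((-1 : ℝ) ^ (m - 1) / (m : ℝ) * s ^ m) • N ^ m) i j) t = Dmat n N t i j :=
    fun i j t => (B_hasDeriv n N i j t).deriv
  have hd1' : ∀ (i j : Fin n),
      (deriv fun s => (∑ m ∈ Finset.Icc 1 (n - 1),
        ((-1 : ℝ) ^ (m - 1) / (m : ℝ) * s ^ m) • N ^ m) i j) = fun t => Dmat n N t i j :=
    fun i j => funext fun t => hd1 i j t
  have hd2 : ∀ (i j : Fin n) (t : ℝ),
      deriv (deriv fun s => (∑ m ∈ Finset.Icc 1 (n - 1),
        ((-1 : ℝ) ^ (m - 1) / (m : ℝ) * s ^ m) • N ^ m) i j) t = Emat n N t i j := by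
    intro i j t
    rw [hd1' i j]
    exact (D_hasDeriv n N i j t).deriv
  refine ⟨hpow n le_rfl, ?_, ?_, ?_, ?_⟩
  · -- B 0 = 0
    show (∑ m ∈ Finset.Icc 1 (n - 1), ((-1 : ℝ) ^ (m - 1) / (m : ℝ) * 0 ^ m) • N ^ m) = 0
    apply Finset.sum_eq_zero
    intro m hm
    rw [Finset.mem_Icc] at hm
    rw [zero_pow (by omega), mul_zero, zero_smul]
  · -- derivative at 0 is N
    intro i j
    rw [hd1 i j 0, Dmat, Matrix.sum_apply]
    rw [Finset.sum_eq_single 1]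
    · simp
    · intro m hm hm1
      rw [Finset.mem_Icc] at hm
      rw [Matrix.smul_apply, smul_eq_mul, zero_pow (by omega), mul_zero, zero_mul]
    · intro h1
      rw [Finset.mem_Icc] at h1
      have hij : N i j = 0 := by
        apply hN
        have := i.isLt
        have := j.isLt
        rw [Fin.le_def]
        omega
      simp [hij]
  · -- geodesic equation, matrix form
    intro t
    have hof1 : (Matrix.of fun i j : Fin n => deriv (deriv fun s =>
        (∑ m ∈ Finset.Icc 1 (n - 1), ((-1 : ℝ) ^ (m - 1) / (m : ℝ) * s ^ m) • N ^ m) i j) t)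
        = Emat n N t := by
      ext i j
      exact hd2 i j t
    have hof2 : (Matrix.of fun i j : Fin n => deriv (fun s =>
        (∑ m ∈ Finset.Icc 1 (n - 1), ((-1 : ℝ) ^ (m - 1) / (m : ℝ) * s ^ m) • N ^ m) i j) t)
        = Dmat n N t := by
      ext i j
      exact hd1 i j t
    rw [hof1, hof2]
    rcases Nat.eq_zero_or_pos n with h0 | hn
    · subst h0
      ext i j
      exact i.elim0
    · exact geo_id n N hpow hn t
  · -- entrywise with Ioo sum
    intro t i j hij
    have hgeo : Emat n N t + (Dmat n N t) ^ 2 = 0 := by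
      rcases Nat.eq_zero_or_pos n with h0 | hn
      · exact absurd i.isLt (by omega)
      · exact geo_id n N hpow hn t
    have hentry : Emat n N t i j + ∑ k : Fin n, Dmat n N t i k * Dmat n N t k j = 0 := by
      have := congrFun (congrFun hgeo i) j
      simpa [pow_two, Matrix.mul_apply] using this
    rw [hd2 i j t]
    have hsum : ∑ k ∈ Finset.Ioo i j, deriv (fun s =>
        (∑ m ∈ Finset.Icc 1 (n - 1), ((-1 : ℝ) ^ (m - 1) / (m : ℝ) * s ^ m) • N ^ m) i k) t *
        deriv (fun s =>
        (∑ m ∈ Finset.Icc 1 (n - 1), ((-1 : ℝ) ^ (m - 1) / (m : ℝ) * s ^ m) • N ^ m) k j) t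
        = ∑ k : Fin n, Dmat n N t i k * Dmat n N t k j := by
      have hstep : ∀ k, deriv (fun s =>
          (∑ m ∈ Finset.Icc 1 (n - 1), ((-1 : ℝ) ^ (m - 1) / (m : ℝ) * s ^ m) • N ^ m) i k) t *
          deriv (fun s =>
          (∑ m ∈ Finset.Icc 1 (n - 1), ((-1 : ℝ) ^ (m - 1) / (m : ℝ) * s ^ m) • N ^ m) k j) t
          = Dmat n N t i k * Dmat n N t k j := by
        intro k
        rw [hd1 i k t, hd1 k j t]
      rw [Finset.sum_congr rfl fun k _ => hstep k]
      apply Finset.sum_subset (Finset.subset_univ _)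
      intro k _ hk
      rw [Finset.mem_Ioo] at hk
      push_neg at hk
      by_cases hki : i < k
      · have : j ≤ k := hk hki
        rw [Dmat_upper hN t k j this, mul_zero]
      · have : k ≤ i := not_lt.1 hki
        rw [Dmat_upper hN t i k this, zero_mul]
    rw [hsum]
    exact hentry
end
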